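/- In the real numbers with the cofinite topology, the set A = ℝ \ {0} is πg-closed but not g-closed. -/

import Mathlib

open Set TopologicalSpace Function

variable {X : Type*} [TopologicalSpace X]

/-- A set is regular open if it equals the interior of its closure. -/
def RegOpen (A : Set X) : Prop := A = interior (closure A)

/-- A set is regular closed if it equals the closure of its interior. -/
def RegClosed (A : Set X) : Prop := A = closure (interior A)

/-- A set is π-open if it is a finite union of regular open sets. -/
def PiOpen (A : Set X) : Prop :=
  ∃ S : Set (Set X), S.Finite ∧ (∀ B ∈ S, RegOpen B) ∧ A = ⋃₀ S

/-- A set is π-closed if its complement is π-open. -/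
def PiClosed (A : Set X) : Prop := PiOpen Aᶜ

def SemiOpen (A : Set X) : Prop := A ⊆ closure (interior A)

def PreOpen (A : Set X) : Prop := A ⊆ interior (closure A)

def SemiPreOpen (A : Set X) : Prop := A ⊆ closure (interior (closure A))

def PreClosed (A : Set X) : Prop := PreOpen Aᶜ

def SemiPreClosed (A : Set X) : Prop := SemiPreOpen Aᶜ

/-- Preclosure: intersection of all preclosed supersets. -/
def pcl (A : Set X) : Set X := ⋂₀ {F | PreClosed F ∧ A ⊆ F}

/-- Semi-preclosure: intersection of all semi-preclosed supersets. -/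
def spcl (A : Set X) : Set X := ⋂₀ {F | SemiPreClosed F ∧ A ⊆ F}

/-- w-closed: closure contained in every semi-open superset. -/
def WClosed (F : Set X) : Prop := ∀ U : Set X, SemiOpen U → F ⊆ U → closure F ⊆ U

def WOpen (A : Set X) : Prop := WClosed Aᶜ

/-- D-closed: pcl(A) ⊆ int(U) whenever A ⊆ U and U is w-open. -/
def DClosed (A : Set X) : Prop := ∀ U : Set X, WOpen U → A ⊆ U → pcl A ⊆ interior U

def DOpen (A : Set X) : Prop := DClosed Aᶜ

/-- D̂-closed: spcl(A) ⊆ U whenever A ⊆ U and U is D-open. -/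
def DHatClosed (A : Set X) : Prop := ∀ U : Set X, DOpen U → A ⊆ U → spcl A ⊆ U

/-- D̂-closure: intersection of all D̂-closed supersets. -/
def DHatCl (A : Set X) : Set X := ⋂₀ {F | DHatClosed F ∧ A ⊆ F}

/-- gD̂-closed: D̂cl(A) ⊆ U whenever A ⊆ U and U is open. -/
def GDHatClosed (A : Set X) : Prop := ∀ U : Set X, IsOpen U → A ⊆ U → DHatCl A ⊆ U

/-- πgD̂-closed: D̂cl(A) ⊆ U whenever A ⊆ U and U is π-open. -/
def PiGDHatClosed (A : Set X) : Prop := ∀ U : Set X, PiOpen U → A ⊆ U → DHatCl A ⊆ U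

instance : Infinite (CofiniteTopology ℝ) := Infinite.of_injective _ CofiniteTopology.of.injective

lemma cof_closure_univ {s : Set (CofiniteTopology ℝ)} (hs : s.Infinite) :
    closure s = univ := by
  rcases (CofiniteTopology.isClosed_iff.mp isClosed_closure) with h | h
  · exact h
  · exact absurd (h.subset subset_closure) hs

lemma cof_regOpen {B : Set (CofiniteTopology ℝ)} (h : RegOpen B) :
    B = ∅ ∨ B = univ := by
  rcases B.eq_empty_or_nonempty with h0 | h0
  · exact Or.inl h0
  · right
    have hB : B.Infinite := by
      have hop : IsOpen B := h ▸ isOpen_interior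
      have := (CofiniteTopology.isOpen_iff.mp hop) h0
      intro hfin
      have : (univ : Set (CofiniteTopology ℝ)).Finite := by
        simpa [union_compl_self] using hfin.union this
      exact Set.infinite_univ this
    have : closure B = univ := cof_closure_univ hB
    rw [h, this, interior_univ]

/-- In ℝ with the cofinite topology, A = ℝ \ {0} is πg-closed but not g-closed. -/
theorem stmt3 :
    let A : Set (CofiniteTopology ℝ) := {CofiniteTopology.of (0 : ℝ)}ᶜ
    (∀ U : Set (CofiniteTopology ℝ), PiOpen U → A ⊆ U → closure A ⊆ U) ∧
    ¬ (∀ U : Set (CofiniteTopology ℝ), IsOpen U → A ⊆ U → closure A ⊆ U) := by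
  intro A
  have hAinf : A.Infinite := by
    have : ({CofiniteTopology.of (0:ℝ)} : Set (CofiniteTopology ℝ)).Finite :=
      finite_singleton _
    exact Set.Finite.infinite_compl this
  have hclA : closure A = univ := cof_closure_univ hAinf
  constructor
  · rintro U ⟨S, _, hreg, rfl⟩ hsub
    have hU : (⋃₀ S) = univ := by
      obtain ⟨x, hx⟩ := hAinf.nonempty
      obtain ⟨B, hBS, hxB⟩ := hsub hx
      rcases cof_regOpen (hreg B hBS) with rfl | rfl
      · exact absurd hxB (notMem_empty x)
      · exact eq_univ_of_univ_subset (subset_sUnion_of_mem hBS)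
    rw [hU]; exact subset_univ _
  · intro h
    have hAopen : IsOpen A := by
      rw [CofiniteTopology.isOpen_iff']
      right; rw [compl_compl]; exact finite_singleton _
    have := h A hAopen le_rfl
    rw [hclA] at this
    exact this (mem_univ (CofiniteTopology.of (0:ℝ))) rfl
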